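/- Define c : ℕ → ℕ by c(1) = 0, c(2n) = 2·c(n), c(2n+1) = c(n+1) + c(n) + 1. Then for every n ≥ 1, 3·c(n) < 2^{⌈log₂ n⌉}. -/

import Mathlib

private lemma two_pow_mod3 (k : ℕ) : 2 ^ k % 3 = 1 ∨ 2 ^ k % 3 = 2 := by
  induction k with
  | zero => left; rfl
  | succ n ih =>
    have h : 2 ^ (n + 1) = 2 ^ n * 2 := pow_succ 2 n
    omega

private lemma clog_two_mul (m : ℕ) (hm : 1 ≤ m) :
    Nat.clog 2 (2 * m) = Nat.clog 2 m + 1 := by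
  have hb : (1:ℕ) < 2 := one_lt_two
  refine le_antisymm ?_ ?_
  · rw [Nat.clog_le_iff_le_pow hb, pow_succ]
    have := Nat.le_pow_clog hb m
    omega
  · have h1 : 2 * m ≤ 2 ^ Nat.clog 2 (2 * m) := Nat.le_pow_clog hb _
    obtain ⟨t, ht⟩ : ∃ t, Nat.clog 2 (2 * m) = t + 1 := by
      rcases Nat.eq_zero_or_pos (Nat.clog 2 (2 * m)) with h | h
      · rw [h] at h1; simp at h1; omega
      · exact ⟨Nat.clog 2 (2 * m) - 1, by omega⟩
    rw [ht]
    have hle : m ≤ 2 ^ t := by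
      rw [ht, pow_succ] at h1; omega
    have := (Nat.clog_le_iff_le_pow hb).mpr hle
    omega

private lemma clog_two_odd (m : ℕ) (hm : 1 ≤ m) :
    Nat.clog 2 (2 * m + 1) = Nat.clog 2 (m + 1) + 1 := by
  have hb : (1:ℕ) < 2 := one_lt_two
  refine le_antisymm ?_ ?_
  · rw [Nat.clog_le_iff_le_pow hb, pow_succ]
    have := Nat.le_pow_clog hb (m + 1)
    omega
  · have h1 : 2 * m + 1 ≤ 2 ^ Nat.clog 2 (2 * m + 1) := Nat.le_pow_clog hb _
    obtain ⟨t, ht⟩ : ∃ t, Nat.clog 2 (2 * m + 1) = t + 1 := by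
      rcases Nat.eq_zero_or_pos (Nat.clog 2 (2 * m + 1)) with h | h
      · rw [h] at h1; simp at h1; omega
      · exact ⟨Nat.clog 2 (2 * m + 1) - 1, by omega⟩
    rw [ht]
    have hle : m + 1 ≤ 2 ^ t := by
      rw [ht, pow_succ] at h1; omega
    have := (Nat.clog_le_iff_le_pow hb).mpr hle
    omega

theorem minColless_lt_third_pow_clog (c : ℕ → ℕ) (h1 : c 1 = 0)
    (heven : ∀ n : ℕ, 1 ≤ n → c (2 * n) = 2 * c n)
    (hodd : ∀ n : ℕ, 1 ≤ n → c (2 * n + 1) = c (n + 1) + c n + 1) :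
    ∀ n : ℕ, 1 ≤ n → 3 * c n < 2 ^ Nat.clog 2 n := by
  have key : ∀ n : ℕ, 1 ≤ n →
      (3 * c n + 1 ≤ 2 ^ Nat.clog 2 n ∧
       3 * c n + 3 * c (n + 1) + 4 ≤ 2 ^ (Nat.clog 2 (n + 1) + 1)) := by
    intro n
    induction n using Nat.strong_induction_on with
    | _ n ih =>
      intro hn
      rcases eq_or_lt_of_le hn with h1n | h1n
      · -- n = 1
        subst h1n
        have hc2 : c 2 = 0 := by rw [heven 1 le_rfl, h1]
        have hclog1 : Nat.clog 2 1 = 0 := Nat.clog_one_right 2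
        have hclog2 : Nat.clog 2 2 = 1 := by
          have := clog_two_mul 1 le_rfl; simpa [hclog1] using this
        constructor
        · rw [h1, hclog1]; norm_num
        · rw [h1, hc2]; norm_num [hclog2]
      · -- n ≥ 2
        rcases Nat.even_or_odd n with ⟨m, hme⟩ | ⟨m, hmo⟩
        · -- n = 2m, m ≥ 1
          have hm : 1 ≤ m := by omega
          have hrw : n = 2 * m := by omega
          subst hrw
          obtain ⟨Pm, Qm⟩ := ih m (by omega) hm
          have ce : c (2 * m) = 2 * c m := heven m hm
          have co : c (2 * m + 1) = c (m + 1) + c m + 1 := hodd m hm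
          have cl1 : Nat.clog 2 (2 * m) = Nat.clog 2 m + 1 := clog_two_mul m hm
          have cl2 : Nat.clog 2 (2 * m + 1) = Nat.clog 2 (m + 1) + 1 :=
            clog_two_odd m hm
          have hmono : 2 ^ Nat.clog 2 m ≤ 2 ^ Nat.clog 2 (m + 1) :=
            Nat.pow_le_pow_right (by norm_num) (Nat.clog_mono_right 2 (by omega))
          have hp1 : (2:ℕ) ^ (Nat.clog 2 m + 1) = 2 * 2 ^ Nat.clog 2 m := by
            rw [pow_succ]; ring
          have hp2 : (2:ℕ) ^ (Nat.clog 2 (m + 1) + 1) = 2 * 2 ^ Nat.clog 2 (m + 1) := by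
            rw [pow_succ]; ring
          have hp3 : (2:ℕ) ^ (Nat.clog 2 (m + 1) + 1 + 1) = 4 * 2 ^ Nat.clog 2 (m + 1) := by
            rw [pow_succ, pow_succ]; ring
          have hmod := two_pow_mod3 (Nat.clog 2 (m + 1))
          constructor
          · rw [ce, cl1, hp1]; omega
          · rw [ce, co, cl2, hp3]
            rw [hp2] at Qm
            omega
        · -- n = 2m + 1, m ≥ 1
          have hm : 1 ≤ m := by omega
          have hrw : n = 2 * m + 1 := by omega
          subst hrw
          obtain ⟨Pm, Qm⟩ := ih m (by omega) hm
          obtain ⟨Pm1, _⟩ := ih (m + 1) (by omega) (by omega)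
          have co : c (2 * m + 1) = c (m + 1) + c m + 1 := hodd m hm
          have ce : c (2 * m + 1 + 1) = 2 * c (m + 1) := by
            have : 2 * m + 1 + 1 = 2 * (m + 1) := by ring
            rw [this]; exact heven (m + 1) (by omega)
          have cl2 : Nat.clog 2 (2 * m + 1) = Nat.clog 2 (m + 1) + 1 :=
            clog_two_odd m hm
          have cl3 : Nat.clog 2 (2 * m + 1 + 1) = Nat.clog 2 (m + 1) + 1 := by
            have : 2 * m + 1 + 1 = 2 * (m + 1) := by ring
            rw [this]; exact clog_two_mul (m + 1) (by omega)
          have hp2 : (2:ℕ) ^ (Nat.clog 2 (m + 1) + 1) = 2 * 2 ^ Nat.clog 2 (m + 1) := by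
            rw [pow_succ]; ring
          have hp3 : (2:ℕ) ^ (Nat.clog 2 (m + 1) + 1 + 1) = 4 * 2 ^ Nat.clog 2 (m + 1) := by
            rw [pow_succ, pow_succ]; ring
          have hmod := two_pow_mod3 (Nat.clog 2 (m + 1))
          constructor
          · rw [co, cl2, hp2]
            rw [hp2] at Qm
            omega
          · rw [co, ce, cl3, hp3]
            rw [hp2] at Qm
            omega
  intro n hn
  have := (key n hn).1
  omega
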